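/- det M⁰ = (-1)^{nm} · det(T⁰₁₁) · det(B_1 ⋯ B_{n-1}), where T⁰₁₁ denotes the upper-left m×m block of the transfer matrix T⁰. -/

import Mathlib

open Matrix

/-- The `nm × nm` block tridiagonal matrix `M⁰` (no corners) with diagonal blocks
`A_1, …, A_n`, superdiagonal blocks `B_1, …, B_{n-1}` and subdiagonal blocks
`C_1, …, C_{n-1}`.  Block indices are `0`-based (`i : Fin n` codes the paper's
index `i+1`). -/
def blockTridiag (m n : ℕ) (A B C : ℕ → Matrix (Fin m) (Fin m) ℂ) :
    Matrix (Fin n × Fin m) (Fin n × Fin m) ℂ :=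
  fun p q =>
    (if (p.1 : ℕ) = q.1 then A (p.1 + 1) p.2 q.2 else 0) +
    (if (q.1 : ℕ) = p.1 + 1 then B (p.1 + 1) p.2 q.2 else 0) +
    (if (p.1 : ℕ) = q.1 + 1 then C p.1 p.2 q.2 else 0)

/-- The partial products `T(k)` of the first `k` factors of the transfer matrix `T⁰`:
`T(1) = [[-B_1⁻¹ A_1, -B_1⁻¹], [I_m, 0]]` and, for `k ≥ 2`,
`T(k) = [[-B_k⁻¹ A_k, -B_k⁻¹ C_{k-1}], [I_m, 0]] · T(k-1)`; we set `T(0) = I_{2m}`. -/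
noncomputable def transfer0Aux (m : ℕ) (A B C : ℕ → Matrix (Fin m) (Fin m) ℂ) :
    ℕ → Matrix (Fin m ⊕ Fin m) (Fin m ⊕ Fin m) ℂ
  | 0 => 1
  | 1 => Matrix.fromBlocks (-(B 1)⁻¹ * A 1) (-(B 1)⁻¹) 1 0
  | k + 2 =>
      Matrix.fromBlocks (-(B (k + 2))⁻¹ * A (k + 2)) (-(B (k + 2))⁻¹ * C (k + 1)) 1 0 *
        transfer0Aux m A B C (k + 1)

/-- The full transfer matrix
`T⁰ = [[-A_n, -C_{n-1}], [I_m, 0]] · T(n-1)` associated with `M⁰`. -/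
noncomputable def transfer0 (m n : ℕ) (A B C : ℕ → Matrix (Fin m) (Fin m) ℂ) :
    Matrix (Fin m ⊕ Fin m) (Fin m ⊕ Fin m) ℂ :=
  Matrix.fromBlocks (-(A n)) (-(C (n - 1))) 1 0 * transfer0Aux m A B C (n - 1)

namespace DetBT

open Finset Equiv

variable {m : ℕ} (A B C : ℕ → Matrix (Fin m) (Fin m) ℂ)

noncomputable def Y : ℕ → Matrix (Fin m) (Fin m) ℂ
  | 0 => 1
  | 1 => -(B 1)⁻¹ * A 1
  | k + 2 => -(B (k + 2))⁻¹ * A (k + 2) * Y (k + 1) + -(B (k + 2))⁻¹ * C (k + 1) * Y k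

noncomputable def Z : ℕ → Matrix (Fin m) (Fin m) ℂ
  | 0 => 0
  | 1 => -(B 1)⁻¹
  | k + 2 => -(B (k + 2))⁻¹ * A (k + 2) * Z (k + 1) + -(B (k + 2))⁻¹ * C (k + 1) * Z k

lemma transferAux_eq : ∀ k, transfer0Aux m A B C (k + 1) =
    fromBlocks (Y A B C (k + 1)) (Z A B C (k + 1)) (Y A B C k) (Z A B C k)
  | 0 => by simp [transfer0Aux, Y, Z]
  | (k + 1) => by
      show Matrix.fromBlocks (-(B (k + 2))⁻¹ * A (k + 2)) (-(B (k + 2))⁻¹ * C (k + 1)) 1 0 *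
        transfer0Aux m A B C (k + 1) = _
      rw [transferAux_eq k, fromBlocks_multiply]
      simp only [one_mul, zero_mul, add_zero, Matrix.one_mul, Matrix.zero_mul]
      rfl

lemma B_mul_inv {i : ℕ} (h : IsUnit (B i)) : B i * (B i)⁻¹ = 1 :=
  mul_nonsing_inv _ ((isUnit_iff_isUnit_det _).mp h)

lemma rowY_one (h : IsUnit (B 1)) :
    A 1 * Y A B C 0 + B 1 * Y A B C 1 = 0 := by
  have h1 := B_mul_inv B h
  simp only [Y, mul_one, neg_mul, mul_neg, ← Matrix.mul_assoc, h1, Matrix.one_mul]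
  abel

lemma rowZ_one (h : IsUnit (B 1)) :
    A 1 * Z A B C 0 + B 1 * Z A B C 1 = -1 := by
  have h1 := B_mul_inv B h
  simp only [Z, mul_zero, mul_neg, h1, zero_add]

lemma rowY_succ (k : ℕ) (h : IsUnit (B (k + 2))) :
    A (k + 2) * Y A B C (k + 1) + B (k + 2) * Y A B C (k + 2) + C (k + 1) * Y A B C k = 0 := by
  have h1 := B_mul_inv B h
  simp only [Y, mul_add, mul_neg, neg_mul, ← Matrix.mul_assoc, h1, Matrix.one_mul]
  abel

lemma rowZ_succ (k : ℕ) (h : IsUnit (B (k + 2))) :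
    A (k + 2) * Z A B C (k + 1) + B (k + 2) * Z A B C (k + 2) + C (k + 1) * Z A B C k = 0 := by
  have h1 := B_mul_inv B h
  simp only [Z, mul_add, mul_neg, neg_mul, ← Matrix.mul_assoc, h1, Matrix.one_mul]
  abel

lemma det_swap_blocks :
    (fromBlocks (0 : Matrix (Fin m) (Fin m) ℂ) (1 : Matrix (Fin m) (Fin m) ℂ)
      (1 : Matrix (Fin m) (Fin m) ℂ) (0 : Matrix (Fin m) (Fin m) ℂ)).det = (-1 : ℂ) ^ m := by
  classical
  let ι : Fin 2 × Fin m ≃ (Fin m ⊕ Fin m) :=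
    { toFun := fun p => if (p.1 : ℕ) = 0 then Sum.inl p.2 else Sum.inr p.2
      invFun := Sum.elim (fun x => (0, x)) (fun x => (1, x))
      left_inv := by rintro ⟨i, x⟩; fin_cases i <;> simp
      right_inv := by rintro (x | x) <;> simp }
  let K : Matrix (Fin m ⊕ Fin m) (Fin m ⊕ Fin m) ℂ := fromBlocks 0 1 1 0
  show K.det = _
  rw [← det_submatrix_equiv_self ι K]
  have h : K.submatrix ι ι =
      (1 : Matrix (Fin 2 × Fin m) (Fin 2 × Fin m) ℂ).submatrix
        (Equiv.prodCongrLeft (fun _ : Fin m => finRotate 2)) id := by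
    ext ⟨i, x⟩ ⟨j, y⟩
    fin_cases i <;> fin_cases j <;>
      (simp only [ι, K, Matrix.submatrix_apply, Equiv.coe_fn_mk]
       simp [Matrix.one_apply, Prod.ext_iff, Equiv.prodCongrLeft_apply, Fin.ext_iff, eq_comm])
  rw [h, det_permute, det_one, mul_one, Equiv.Perm.sign_prodCongrLeft]
  simp [sign_finRotate]

lemma det_XW10 (X W : Matrix (Fin m) (Fin m) ℂ) :
    (fromBlocks X W 1 0).det = (-1 : ℂ) ^ m * W.det := by
  have h : fromBlocks X W (1 : Matrix (Fin m) (Fin m) ℂ) 0 =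
      fromBlocks 1 X 0 1 * (fromBlocks 0 1 1 0 * fromBlocks 1 0 0 W) := by
    rw [fromBlocks_multiply, fromBlocks_multiply]
    simp
  rw [h, det_mul, det_mul, det_swap_blocks, det_fromBlocks_zero₂₁, det_fromBlocks_zero₂₁]
  simp

lemma detT (k : ℕ) (hBk : ∀ i, 1 ≤ i → i ≤ k + 1 → IsUnit (B i)) :
    (∏ i ∈ Finset.range (k + 1), (B (i + 1)).det) * (transfer0Aux m A B C (k + 1)).det =
      ∏ i ∈ Finset.range k, (C (i + 1)).det := by
  induction k with
  | zero =>
      have h1 : (B 1)⁻¹.det * (B 1).det = 1 :=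
        det_nonsing_inv_mul_det _ ((isUnit_iff_isUnit_det _).mp (hBk 1 le_rfl le_rfl))
      have h2 : ((-1 : ℂ) ^ m) * (-1 : ℂ) ^ m = 1 := by
        rw [← pow_add]; exact Even.neg_one_pow ⟨m, rfl⟩
      show (∏ i ∈ Finset.range 1, (B (i + 1)).det) *
        (fromBlocks (-(B 1)⁻¹ * A 1) (-(B 1)⁻¹) 1 0).det = _
      rw [det_XW10, Finset.prod_range_one, Finset.range_zero, Finset.prod_empty]
      rw [show -(B 1)⁻¹ = -((B 1)⁻¹) from rfl, det_neg]
      simp only [Fintype.card_fin]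
      linear_combination ((-1 : ℂ) ^ m * (-1 : ℂ) ^ m) * h1 + h2
  | succ k ih =>
      have hBk' : ∀ i, 1 ≤ i → i ≤ k + 1 → IsUnit (B i) := fun i h1 h2 => hBk i h1 (by omega)
      have h1 : (B (k + 2))⁻¹.det * (B (k + 2)).det = 1 :=
        det_nonsing_inv_mul_det _
          ((isUnit_iff_isUnit_det _).mp (hBk (k + 2) (by omega) (by omega)))
      have h2 : ((-1 : ℂ) ^ m) * (-1 : ℂ) ^ m = 1 := by
        rw [← pow_add]; exact Even.neg_one_pow ⟨m, rfl⟩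
      have ih' := ih hBk'
      show (∏ i ∈ Finset.range (k + 2), (B (i + 1)).det) *
        (fromBlocks (-(B (k + 2))⁻¹ * A (k + 2)) (-(B (k + 2))⁻¹ * C (k + 1)) 1 0 *
          transfer0Aux m A B C (k + 1)).det = _
      rw [det_mul, det_XW10,
        Finset.prod_range_succ (fun i => (B (i + 1)).det) (k + 1),
        Finset.prod_range_succ (fun i => (C (i + 1)).det) k,
        show -(B (k + 2))⁻¹ * C (k + 1) = -((B (k + 2))⁻¹ * C (k + 1)) by rw [neg_mul],
        det_neg, det_mul]
      simp only [Fintype.card_fin, show k + 1 + 1 = k + 2 from rfl]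
      linear_combination
        ((-1 : ℂ) ^ m * (-1 : ℂ) ^ m * (B (k + 2))⁻¹.det * (B (k + 2)).det *
          (C (k + 1)).det) * ih' +
        ((∏ i ∈ Finset.range k, (C (i + 1)).det) * (C (k + 1)).det *
          ((-1 : ℂ) ^ m * (-1 : ℂ) ^ m)) * h1 +
        ((∏ i ∈ Finset.range k, (C (i + 1)).det) * (C (k + 1)).det) * h2

lemma det_listprod (f : ℕ → Matrix (Fin m) (Fin m) ℂ) (k : ℕ) :
    (((List.range k).map f).prod).det = ∏ i ∈ Finset.range k, (f i).det := by
  induction k with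
  | zero => simp
  | succ k ih =>
      rw [List.range_succ, List.map_append, List.prod_append, Finset.prod_range_succ, det_mul, ih]
      simp

section Main

variable (s : ℕ)

/-- the right multiplier: identity columns `j < s`, column `s` is the stacked `Y`s,
column `s+1` is the stacked `Z`s. -/
noncomputable def U : Matrix (Fin (s + 2) × Fin m) (Fin (s + 2) × Fin m) ℂ :=
  fun p q =>
    if (q.1 : ℕ) = s then Y A B C p.1 p.2 q.2
    else if (q.1 : ℕ) = s + 1 then Z A B C p.1 p.2 q.2
    else if p = q then 1 else 0

lemma mul_stack (G : ℕ → Matrix (Fin m) (Fin m) ℂ) (p : Fin (s + 2) × Fin m) (y : Fin m) :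
    (∑ c : Fin (s + 2) × Fin m, blockTridiag m (s + 2) A B C p c * G c.1 c.2 y) =
      (A ((p.1 : ℕ) + 1) * G p.1) p.2 y
      + (if (p.1 : ℕ) < s + 1 then (B ((p.1 : ℕ) + 1) * G ((p.1 : ℕ) + 1)) p.2 y else 0)
      + (if 1 ≤ (p.1 : ℕ) then (C p.1 * G ((p.1 : ℕ) - 1)) p.2 y else 0) := by
  rw [Fintype.sum_prod_type]
  have expand : ∀ (k : Fin (s + 2)) (z : Fin m),
      blockTridiag m (s + 2) A B C p (k, z) * G k z y =
        (if (p.1 : ℕ) = (k : ℕ) then A ((p.1 : ℕ) + 1) p.2 z * G k z y else 0)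
      + ((if (k : ℕ) = (p.1 : ℕ) + 1 then B ((p.1 : ℕ) + 1) p.2 z * G k z y else 0)
      + (if (p.1 : ℕ) = (k : ℕ) + 1 then C (p.1 : ℕ) p.2 z * G k z y else 0)) := by
    intro k z
    simp only [blockTridiag, add_mul, ite_mul, zero_mul, add_assoc]
  simp_rw [expand, Finset.sum_add_distrib]
  rw [add_assoc]
  congr 1
  · -- A-term
    rw [Finset.sum_eq_single p.1]
    · simp [Matrix.mul_apply]
    · intro b _ hb
      apply Finset.sum_eq_zero
      intro z _
      rw [if_neg (fun h => hb (Fin.ext h.symm))]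
    · intro h; exact absurd (Finset.mem_univ _) h
  congr 1
  · -- B-term
    by_cases hp : (p.1 : ℕ) < s + 1
    · rw [if_pos hp, Finset.sum_eq_single (⟨(p.1 : ℕ) + 1, by omega⟩ : Fin (s + 2))]
      · rw [Finset.sum_congr rfl (fun z _ => if_pos rfl)]
        simp [Matrix.mul_apply]
      · intro b _ hb
        apply Finset.sum_eq_zero
        intro z _
        rw [if_neg (fun h => hb (Fin.ext (by simpa using h)))]
      · intro h; exact absurd (Finset.mem_univ _) h
    · rw [if_neg hp]
      apply Finset.sum_eq_zero
      intro k _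
      apply Finset.sum_eq_zero
      intro z _
      have hk := k.is_lt
      rw [if_neg (by omega)]
  · -- C-term
    by_cases hp : 1 ≤ (p.1 : ℕ)
    · rw [if_pos hp, Finset.sum_eq_single (⟨(p.1 : ℕ) - 1, by omega⟩ : Fin (s + 2))]
      · rw [Finset.sum_congr rfl (fun z _ => if_pos (by simp; omega))]
        simp [Matrix.mul_apply]
      · intro b _ hb
        apply Finset.sum_eq_zero
        intro z _
        rw [if_neg (fun h => hb (Fin.ext (by simp; omega)))]
      · intro h; exact absurd (Finset.mem_univ _) h
    · rw [if_neg hp]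
      apply Finset.sum_eq_zero
      intro k _
      apply Finset.sum_eq_zero
      intro z _
      rw [if_neg (by omega)]

lemma col_lt (p q : Fin (s + 2) × Fin m) (hq : (q.1 : ℕ) < s) :
    (blockTridiag m (s + 2) A B C * U A B C s) p q = blockTridiag m (s + 2) A B C p q := by
  rw [Matrix.mul_apply]
  have hU : ∀ c, U A B C s c q = if c = q then 1 else 0 := by
    intro c
    simp only [U]
    rw [if_neg (by omega), if_neg (by omega)]
  simp_rw [hU, mul_ite, mul_one, mul_zero]
  rw [Finset.sum_ite_eq' Finset.univ q fun c => blockTridiag m (s + 2) A B C p c]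
  exact if_pos (Finset.mem_univ q)

lemma col_Y (p q : Fin (s + 2) × Fin m) (hq : (q.1 : ℕ) = s) :
    (blockTridiag m (s + 2) A B C * U A B C s) p q =
      (A ((p.1 : ℕ) + 1) * Y A B C p.1) p.2 q.2
      + (if (p.1 : ℕ) < s + 1 then (B ((p.1 : ℕ) + 1) * Y A B C ((p.1 : ℕ) + 1)) p.2 q.2 else 0)
      + (if 1 ≤ (p.1 : ℕ) then (C p.1 * Y A B C ((p.1 : ℕ) - 1)) p.2 q.2 else 0) := by
  rw [Matrix.mul_apply]
  have hU : ∀ c, U A B C s c q = Y A B C c.1 c.2 q.2 := fun c => if_pos hq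
  simp_rw [hU]
  exact mul_stack A B C s (fun k => Y A B C k) p q.2

lemma col_Z (p q : Fin (s + 2) × Fin m) (hq : (q.1 : ℕ) = s + 1) :
    (blockTridiag m (s + 2) A B C * U A B C s) p q =
      (A ((p.1 : ℕ) + 1) * Z A B C p.1) p.2 q.2
      + (if (p.1 : ℕ) < s + 1 then (B ((p.1 : ℕ) + 1) * Z A B C ((p.1 : ℕ) + 1)) p.2 q.2 else 0)
      + (if 1 ≤ (p.1 : ℕ) then (C p.1 * Z A B C ((p.1 : ℕ) - 1)) p.2 q.2 else 0) := by
  rw [Matrix.mul_apply]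
  have hU : ∀ c, U A B C s c q = Z A B C c.1 c.2 q.2 := by
    intro c
    simp only [U]
    rw [if_neg (by omega), if_pos hq]
  simp_rw [hU]
  exact mul_stack A B C s (fun k => Z A B C k) p q.2

lemma PY_zero (hB1 : IsUnit (B 1)) (p q : Fin (s + 2) × Fin m)
    (hq : (q.1 : ℕ) = s) (hp : (p.1 : ℕ) = 0) :
    (blockTridiag m (s + 2) A B C * U A B C s) p q = 0 := by
  rw [col_Y A B C s p q hq, hp, if_pos (by omega), if_neg (by omega), add_zero,
    ← Matrix.add_apply]
  rw [show (0 : ℕ) + 1 = 1 from rfl, rowY_one A B C hB1]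
  rfl

lemma PZ_zero (hB1 : IsUnit (B 1)) (p q : Fin (s + 2) × Fin m)
    (hq : (q.1 : ℕ) = s + 1) (hp : (p.1 : ℕ) = 0) :
    (blockTridiag m (s + 2) A B C * U A B C s) p q =
      (-1 : Matrix (Fin m) (Fin m) ℂ) p.2 q.2 := by
  rw [col_Z A B C s p q hq, hp, if_pos (by omega), if_neg (by omega), add_zero,
    ← Matrix.add_apply]
  rw [show (0 : ℕ) + 1 = 1 from rfl, rowZ_one A B C hB1]

lemma PY_mid (hB : ∀ i, 1 ≤ i → i ≤ s + 1 → IsUnit (B i)) (p q : Fin (s + 2) × Fin m)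
    (hq : (q.1 : ℕ) = s) (hp1 : 1 ≤ (p.1 : ℕ)) (hp2 : (p.1 : ℕ) ≤ s) :
    (blockTridiag m (s + 2) A B C * U A B C s) p q = 0 := by
  obtain ⟨k, hk⟩ : ∃ k, (p.1 : ℕ) = k + 1 := ⟨(p.1 : ℕ) - 1, by omega⟩
  rw [col_Y A B C s p q hq, if_pos (by omega), if_pos (by omega), hk,
    show k + 1 + 1 = k + 2 from rfl, show k + 1 - 1 = k from rfl,
    ← Matrix.add_apply, ← Matrix.add_apply]
  have h := rowY_succ A B C k (hB (k + 2) (by omega) (by omega))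
  rw [show A (k + 2) * Y A B C (k + 1) + B (k + 2) * Y A B C (k + 2) + C (k + 1) * Y A B C k
      = A (k + 1 + 1) * Y A B C (k + 1) + B (k + 1 + 1) * Y A B C (k + 1 + 1)
        + C (k + 1) * Y A B C k from rfl] at h
  rw [h]
  rfl

lemma PZ_mid (hB : ∀ i, 1 ≤ i → i ≤ s + 1 → IsUnit (B i)) (p q : Fin (s + 2) × Fin m)
    (hq : (q.1 : ℕ) = s + 1) (hp1 : 1 ≤ (p.1 : ℕ)) (hp2 : (p.1 : ℕ) ≤ s) :
    (blockTridiag m (s + 2) A B C * U A B C s) p q = 0 := by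
  obtain ⟨k, hk⟩ : ∃ k, (p.1 : ℕ) = k + 1 := ⟨(p.1 : ℕ) - 1, by omega⟩
  rw [col_Z A B C s p q hq, if_pos (by omega), if_pos (by omega), hk,
    show k + 1 + 1 = k + 2 from rfl, show k + 1 - 1 = k from rfl,
    ← Matrix.add_apply, ← Matrix.add_apply]
  have h := rowZ_succ A B C k (hB (k + 2) (by omega) (by omega))
  rw [show A (k + 2) * Z A B C (k + 1) + B (k + 2) * Z A B C (k + 2) + C (k + 1) * Z A B C k
      = A (k + 1 + 1) * Z A B C (k + 1) + B (k + 1 + 1) * Z A B C (k + 1 + 1)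
        + C (k + 1) * Z A B C k from rfl] at h
  rw [h]
  rfl

lemma PY_top (p q : Fin (s + 2) × Fin m) (hq : (q.1 : ℕ) = s) (hp : (p.1 : ℕ) = s + 1) :
    (blockTridiag m (s + 2) A B C * U A B C s) p q =
      (A (s + 2) * Y A B C (s + 1) + C (s + 1) * Y A B C s) p.2 q.2 := by
  rw [col_Y A B C s p q hq, hp, if_neg (by omega), if_pos (by omega), add_zero]
  rfl

lemma PZ_top (p q : Fin (s + 2) × Fin m) (hq : (q.1 : ℕ) = s + 1) (hp : (p.1 : ℕ) = s + 1) :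
    (blockTridiag m (s + 2) A B C * U A B C s) p q =
      (A (s + 2) * Z A B C (s + 1) + C (s + 1) * Z A B C s) p.2 q.2 := by
  rw [col_Z A B C s p q hq, hp, if_neg (by omega), if_pos (by omega), add_zero]
  rfl

lemma tau_val (i : Fin (s + 2)) :
    ((finRotate (s + 2) i : Fin (s + 2)) : ℕ) =
      if (i : ℕ) = s + 1 then 0 else (i : ℕ) + 1 := by
  rw [finRotate_succ_apply, Fin.val_add_one]
  by_cases h : i = Fin.last (s + 1)
  · rw [if_pos h, if_pos (by rw [h]; rfl)]
  · rw [if_neg h, if_neg (fun hv => h (by ext; simpa using hv))]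

set_option maxHeartbeats 2000000 in
theorem det_key (hB : ∀ i, 1 ≤ i → i ≤ s + 1 → IsUnit (B i))
    (hC : ∀ i, 1 ≤ i → i ≤ s + 1 → IsUnit (C i)) :
    (blockTridiag m (s + 2) A B C).det =
      (-1 : ℂ) ^ ((s + 2) * m) *
        (Matrix.toBlocks₁₁ (transfer0 m (s + 2) A B C)).det *
        (∏ i ∈ Finset.range (s + 1), (B (i + 1)).det) := by
  classical
  set P := blockTridiag m (s + 2) A B C * U A B C s with hPdef
  set σ : Equiv.Perm (Fin (s + 2) × Fin m) :=
    Equiv.prodCongrLeft (fun _ : Fin m => finRotate (s + 2)) with hσdef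
  have hσ1 : ∀ p : Fin (s + 2) × Fin m, σ p = (finRotate (s + 2) p.1, p.2) := fun p => rfl
  set b : Fin (s + 2) × Fin m → Fin (s + 1) :=
    fun p => if h : (p.1 : ℕ) < s then ⟨(p.1 : ℕ) + 1, by omega⟩ else ⟨0, by omega⟩ with hbdef
  -- block triangularity of the permuted product
  have htri : (P.submatrix σ id).BlockTriangular b := by
    intro p q hlt
    by_cases hps : (p.1 : ℕ) < s
    · have hbp : (b p : ℕ) = (p.1 : ℕ) + 1 := by rw [hbdef]; simp only [dif_pos hps]
      have hbq := hlt
      rw [Fin.lt_def, hbp] at hbq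
      have hrow : ((σ p).1 : ℕ) = (p.1 : ℕ) + 1 := by
        rw [hσ1, tau_val]; rw [if_neg (by omega)]
      show P (σ p) q = 0
      by_cases hq : (q.1 : ℕ) < s
      · have hbqv : (b q : ℕ) = (q.1 : ℕ) + 1 := by rw [hbdef]; simp only [dif_pos hq]
        have hq1 : (q.1 : ℕ) < (p.1 : ℕ) := by omega
        rw [hPdef, col_lt A B C s _ q hq]
        simp only [blockTridiag]
        rw [if_neg (by omega), if_neg (by omega), if_neg (by omega)]
        norm_num
      · by_cases hqY : (q.1 : ℕ) = s
        · exact hPdef ▸ PY_mid A B C s hB (σ p) q hqY (by omega) (by omega)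
        · have hqZ : (q.1 : ℕ) = s + 1 := by have := q.1.is_lt; omega
          exact hPdef ▸ PZ_mid A B C s hB (σ p) q hqZ (by omega) (by omega)
    · exfalso
      rw [hbdef] at hlt
      simp only [dif_neg hps] at hlt
      exact absurd hlt (by simp [Fin.lt_def])
  -- the C-blocks
  have hblockC : ∀ j : Fin s,
      ((P.submatrix σ id).toSquareBlock b j.succ).det = (C ((j : ℕ) + 1)).det := by
    intro j
    have hjlt : (j : ℕ) < s := j.is_lt
    have hfib : ∀ p : Fin (s + 2) × Fin m, b p = j.succ ↔ (p.1 : ℕ) = (j : ℕ) := by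
      intro p
      rw [hbdef]
      by_cases h : (p.1 : ℕ) < s
      · simp only [dif_pos h, Fin.ext_iff, Fin.val_succ]; omega
      · simp only [dif_neg h, Fin.ext_iff, Fin.val_succ]; omega
    let e : Fin m ≃ {p : Fin (s + 2) × Fin m // b p = j.succ} :=
      { toFun := fun x => ⟨((⟨(j : ℕ), by omega⟩ : Fin (s + 2)), x), (hfib _).mpr rfl⟩
        invFun := fun u => u.1.2
        left_inv := fun x => rfl
        right_inv := by
          rintro ⟨⟨i, x⟩, hi⟩
          have := (hfib _).mp hi
          simp only [Subtype.mk.injEq, Prod.mk.injEq]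
          exact ⟨Fin.ext (by simpa using this.symm), trivial⟩ }
    rw [← det_submatrix_equiv_self e]
    congr 1
    ext x y
    show P (σ ((⟨(j : ℕ), by omega⟩ : Fin (s + 2)), x)) ((⟨(j : ℕ), by omega⟩ : Fin (s + 2)), y)
      = C ((j : ℕ) + 1) x y
    have hv : (((⟨(j : ℕ), by omega⟩ : Fin (s + 2))) : ℕ) = (j : ℕ) := rfl
    have hrow : ((σ ((⟨(j : ℕ), by omega⟩ : Fin (s + 2)), x)).1 : ℕ) = (j : ℕ) + 1 := by
      rw [hσ1, tau_val]; exact if_neg (by simp; omega)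
    rw [hPdef, col_lt A B C s _ _ (by simp [hjlt])]
    simp only [blockTridiag]
    rw [if_neg (by omega), if_neg (by omega), if_pos (by omega), hrow]
    norm_num
    rfl
  -- the corner block
  have hfib0 : ∀ p : Fin (s + 2) × Fin m, b p = 0 ↔ ¬ (p.1 : ℕ) < s := by
    intro p
    rw [hbdef]
    dsimp only
    split_ifs with h
    · constructor
      · intro hh; exact absurd (congrArg Fin.val hh) (by simp)
      · intro hh; exact absurd h hh
    · exact iff_of_true rfl h
  let eS : (Fin m ⊕ Fin m) ≃ {p : Fin (s + 2) × Fin m // b p = 0} :=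
    { toFun := Sum.elim
        (fun x => ⟨((⟨s, by omega⟩ : Fin (s + 2)), x), (hfib0 _).mpr (by simp)⟩)
        (fun x => ⟨((⟨s + 1, by omega⟩ : Fin (s + 2)), x), (hfib0 _).mpr (by simp)⟩)
      invFun := fun u => if (u.1.1 : ℕ) = s then Sum.inl u.1.2 else Sum.inr u.1.2
      left_inv := by rintro (x | x) <;> simp
      right_inv := by
        rintro ⟨⟨i, x⟩, hi⟩
        have hge := (hfib0 _).mp hi
        have hlt : (i : ℕ) < s + 2 := i.is_lt
        dsimp only at hge ⊢
        by_cases hc : (i : ℕ) = s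
        · rw [if_pos hc]
          simp only [Sum.elim_inl, Subtype.mk.injEq, Prod.mk.injEq]
          exact ⟨Fin.ext (by simpa using hc.symm), trivial⟩
        · rw [if_neg hc]
          simp only [Sum.elim_inr, Subtype.mk.injEq, Prod.mk.injEq]
          exact ⟨Fin.ext (by simp; omega), trivial⟩ }
  have hblock0 : ((P.submatrix σ id).toSquareBlock b 0).det =
      (A (s + 2) * Y A B C (s + 1) + C (s + 1) * Y A B C s).det * (-1 : ℂ) ^ m := by
    rw [← det_submatrix_equiv_self eS]
    have hEq : ((P.submatrix σ id).toSquareBlock b 0).submatrix eS eS =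
        fromBlocks (A (s + 2) * Y A B C (s + 1) + C (s + 1) * Y A B C s)
          (A (s + 2) * Z A B C (s + 1) + C (s + 1) * Z A B C s) 0 (-1) := by
      ext u v
      cases u with
      | inl x =>
          cases v with
          | inl y =>
              show P (σ ((⟨s, by omega⟩ : Fin (s + 2)), x)) ((⟨s, by omega⟩ : Fin (s + 2)), y) = _
              rw [hPdef, PY_top A B C s _ _ (by simp) (by rw [hσ1, tau_val]; simp)]
              rfl
          | inr y =>
              show P (σ ((⟨s, by omega⟩ : Fin (s + 2)), x)) ((⟨s + 1, by omega⟩ : Fin (s + 2)), y) = _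
              rw [hPdef, PZ_top A B C s _ _ (by simp) (by rw [hσ1, tau_val]; simp)]
              rfl
      | inr x =>
          cases v with
          | inl y =>
              show P (σ ((⟨s + 1, by omega⟩ : Fin (s + 2)), x)) ((⟨s, by omega⟩ : Fin (s + 2)), y) = _
              rw [hPdef,
                PY_zero A B C s (hB 1 le_rfl (by omega)) _ _ (by simp) (by rw [hσ1, tau_val]; simp)]
              rfl
          | inr y =>
              show P (σ ((⟨s + 1, by omega⟩ : Fin (s + 2)), x)) ((⟨s + 1, by omega⟩ : Fin (s + 2)), y) = _
              rw [hPdef,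
                PZ_zero A B C s (hB 1 le_rfl (by omega)) _ _ (by simp) (by rw [hσ1, tau_val]; simp)]
              rfl
    rw [hEq, det_fromBlocks_zero₂₁, det_neg, det_one, Fintype.card_fin, mul_one]
  -- determinant of X
  have hdet1 : (P.submatrix σ id).det = ((-1 : ℂ) ^ m) ^ (s + 1) * P.det := by
    rw [det_permute]
    congr 1
    rw [hσdef, Equiv.Perm.sign_prodCongrLeft]
    simp only [sign_finRotate, Finset.prod_const, Finset.card_univ, Fintype.card_fin]
    push_cast
    rw [← pow_mul, ← pow_mul, Nat.mul_comm]
  have hXdet : ((-1 : ℂ) ^ m) ^ (s + 1) * P.det =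
      ((A (s + 2) * Y A B C (s + 1) + C (s + 1) * Y A B C s).det * (-1 : ℂ) ^ m) *
        ∏ i ∈ Finset.range s, (C (i + 1)).det := by
    rw [← hdet1, htri.det_fintype, Fin.prod_univ_succ, hblock0]
    congr 1
    calc (∏ j : Fin s, ((P.submatrix σ id).toSquareBlock b j.succ).det)
        = ∏ j : Fin s, (C ((j : ℕ) + 1)).det :=
          Finset.prod_congr rfl fun j _ => hblockC j
      _ = ∏ i ∈ Finset.range s, (C (i + 1)).det :=
          Fin.prod_univ_eq_prod_range (fun i => (C (i + 1)).det) s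
  -- determinant of U
  set b' : Fin (s + 2) × Fin m → Fin (s + 1) :=
    fun p => ⟨min (p.1 : ℕ) s, by omega⟩ with hb'def
  have hUtri : (U A B C s).BlockTriangular b' := by
    intro p q hlt
    rw [hb'def, Fin.lt_def] at hlt
    dsimp only at hlt
    have h1 : (q.1 : ℕ) < s := by omega
    have h2 : (q.1 : ℕ) < (p.1 : ℕ) := by omega
    simp only [U]
    rw [if_neg (by omega), if_neg (by omega), if_neg]
    intro hpq
    rw [hpq] at h2
    exact lt_irrefl _ h2
  have hfib' : ∀ (j : Fin s) (p : Fin (s + 2) × Fin m),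
      b' p = j.castSucc ↔ (p.1 : ℕ) = (j : ℕ) := by
    intro j p
    rw [hb'def]
    have := j.is_lt
    simp only [Fin.ext_iff, Fin.coe_castSucc]
    omega
  have hUblock1 : ∀ j : Fin s, ((U A B C s).toSquareBlock b' j.castSucc).det = 1 := by
    intro j
    let e : Fin m ≃ {p : Fin (s + 2) × Fin m // b' p = j.castSucc} :=
      { toFun := fun x => ⟨((⟨(j : ℕ), by omega⟩ : Fin (s + 2)), x), (hfib' j _).mpr rfl⟩
        invFun := fun u => u.1.2
        left_inv := fun x => rfl
        right_inv := by
          rintro ⟨⟨i, x⟩, hi⟩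
          have := (hfib' j _).mp hi
          simp only [Subtype.mk.injEq, Prod.mk.injEq]
          exact ⟨Fin.ext (by simpa using this.symm), trivial⟩ }
    rw [← det_submatrix_equiv_self e]
    have hone : ((U A B C s).toSquareBlock b' j.castSucc).submatrix e e = 1 := by
      ext x y
      show U A B C s ((⟨(j : ℕ), by omega⟩ : Fin (s + 2)), x) ((⟨(j : ℕ), by omega⟩ : Fin (s + 2)), y)
        = (1 : Matrix (Fin m) (Fin m) ℂ) x y
      have hjlt : (j : ℕ) < s := j.is_lt
      simp only [U]
      rw [if_neg (by omega), if_neg (by omega)]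
      simp [Prod.ext_iff, Matrix.one_apply, Fin.ext_iff]
    rw [hone, det_one]
  have hfibS : ∀ p : Fin (s + 2) × Fin m, b' p = Fin.last s ↔ ¬ (p.1 : ℕ) < s := by
    intro p
    rw [hb'def]
    simp only [Fin.ext_iff, Fin.val_last]
    omega
  let eS2 : (Fin m ⊕ Fin m) ≃ {p : Fin (s + 2) × Fin m // b' p = Fin.last s} :=
    { toFun := Sum.elim
        (fun x => ⟨((⟨s, by omega⟩ : Fin (s + 2)), x), (hfibS _).mpr (by simp)⟩)
        (fun x => ⟨((⟨s + 1, by omega⟩ : Fin (s + 2)), x), (hfibS _).mpr (by simp)⟩)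
      invFun := fun u => if (u.1.1 : ℕ) = s then Sum.inl u.1.2 else Sum.inr u.1.2
      left_inv := by rintro (x | x) <;> simp
      right_inv := by
        rintro ⟨⟨i, x⟩, hi⟩
        have hge := (hfibS _).mp hi
        have hlt : (i : ℕ) < s + 2 := i.is_lt
        dsimp only at hge ⊢
        by_cases hc : (i : ℕ) = s
        · rw [if_pos hc]
          simp only [Sum.elim_inl, Subtype.mk.injEq, Prod.mk.injEq]
          exact ⟨Fin.ext (by simpa using hc.symm), trivial⟩
        · rw [if_neg hc]
          simp only [Sum.elim_inr, Subtype.mk.injEq, Prod.mk.injEq]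
          exact ⟨Fin.ext (by simp; omega), trivial⟩ }
  have hUblockS : ((U A B C s).toSquareBlock b' (Fin.last s)).det =
      (-1 : ℂ) ^ m * (transfer0Aux m A B C (s + 1)).det := by
    rw [← det_submatrix_equiv_self eS2]
    have hEq : ((U A B C s).toSquareBlock b' (Fin.last s)).submatrix eS2 eS2 =
        fromBlocks (Y A B C s) (Z A B C s) (Y A B C (s + 1)) (Z A B C (s + 1)) := by
      ext u v
      cases u with
      | inl x =>
          cases v with
          | inl y =>
              show U A B C s ((⟨s, by omega⟩ : Fin (s + 2)), x) ((⟨s, by omega⟩ : Fin (s + 2)), y) = _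
              simp only [U]
              rw [if_pos (by simp)]
              rfl
          | inr y =>
              show U A B C s ((⟨s, by omega⟩ : Fin (s + 2)), x) ((⟨s + 1, by omega⟩ : Fin (s + 2)), y) = _
              simp only [U]
              rw [if_neg (by simp), if_pos (by simp)]
              rfl
      | inr x =>
          cases v with
          | inl y =>
              show U A B C s ((⟨s + 1, by omega⟩ : Fin (s + 2)), x) ((⟨s, by omega⟩ : Fin (s + 2)), y) = _
              simp only [U]
              rw [if_pos (by simp)]
              rfl
          | inr y =>
              show U A B C s ((⟨s + 1, by omega⟩ : Fin (s + 2)), x) ((⟨s + 1, by omega⟩ : Fin (s + 2)), y) = _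
              simp only [U]
              rw [if_neg (by simp), if_pos (by simp)]
              rfl
    rw [hEq]
    have hsw : fromBlocks (Y A B C s) (Z A B C s) (Y A B C (s + 1)) (Z A B C (s + 1)) =
        fromBlocks (0 : Matrix (Fin m) (Fin m) ℂ) (1 : Matrix (Fin m) (Fin m) ℂ)
          (1 : Matrix (Fin m) (Fin m) ℂ) (0 : Matrix (Fin m) (Fin m) ℂ) *
          transfer0Aux m A B C (s + 1) := by
      rw [transferAux_eq A B C s, fromBlocks_multiply]
      simp
    rw [hsw, det_mul, det_swap_blocks]
  have hUdet : (U A B C s).det = (-1 : ℂ) ^ m * (transfer0Aux m A B C (s + 1)).det := by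
    rw [hUtri.det_fintype, Fin.prod_univ_castSucc, hUblockS]
    rw [Finset.prod_congr rfl fun j _ => hUblock1 j]
    simp
  -- transfer matrix upper-left block
  have hT11 : Matrix.toBlocks₁₁ (transfer0 m (s + 2) A B C) =
      -(A (s + 2) * Y A B C (s + 1) + C (s + 1) * Y A B C s) := by
    show Matrix.toBlocks₁₁
      (fromBlocks (-(A (s + 2))) (-(C (s + 1))) 1 0 * transfer0Aux m A B C (s + 1)) = _
    rw [transferAux_eq A B C s, fromBlocks_multiply, Matrix.toBlocks_fromBlocks₁₁]
    simp only [Matrix.neg_mul, neg_add]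
  -- nonvanishing facts
  have hTdet := detT A B C s hB
  have hCne : (∏ i ∈ Finset.range s, (C (i + 1)).det) ≠ 0 := by
    apply Finset.prod_ne_zero_iff.mpr
    intro i hi
    have hi' := Finset.mem_range.mp hi
    exact ((isUnit_iff_isUnit_det _).mp (hC (i + 1) (by omega) (by omega))).ne_zero
  have htne : (transfer0Aux m A B C (s + 1)).det ≠ 0 := by
    intro h0
    apply hCne
    rw [← hTdet, h0, mul_zero]
  -- final algebra
  have hε2 : (-1 : ℂ) ^ m * (-1 : ℂ) ^ m = 1 := by
    rw [← pow_add]; exact Even.neg_one_pow ⟨m, rfl⟩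
  rw [hT11, det_neg, Fintype.card_fin,
    show ((-1 : ℂ)) ^ ((s + 2) * m) = ((-1 : ℂ) ^ m) ^ (s + 2) by rw [pow_mul']]
  have hmain : ((-1 : ℂ) ^ m) ^ (s + 1) *
      ((blockTridiag m (s + 2) A B C).det *
        ((-1 : ℂ) ^ m * (transfer0Aux m A B C (s + 1)).det)) =
      ((A (s + 2) * Y A B C (s + 1) + C (s + 1) * Y A B C s).det * (-1 : ℂ) ^ m) *
        ∏ i ∈ Finset.range s, (C (i + 1)).det := by
    rw [← hUdet, ← det_mul, ← hPdef]
    exact hXdet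
  have hc : ((-1 : ℂ) ^ m) ^ (s + 2) * (blockTridiag m (s + 2) A B C).det =
      (A (s + 2) * Y A B C (s + 1) + C (s + 1) * Y A B C s).det * (-1 : ℂ) ^ m *
        (∏ i ∈ Finset.range (s + 1), (B (i + 1)).det) := by
    apply mul_right_cancel₀ htne
    calc ((-1 : ℂ) ^ m) ^ (s + 2) * (blockTridiag m (s + 2) A B C).det *
          (transfer0Aux m A B C (s + 1)).det
        = ((-1 : ℂ) ^ m) ^ (s + 1) *
            ((blockTridiag m (s + 2) A B C).det *
              ((-1 : ℂ) ^ m * (transfer0Aux m A B C (s + 1)).det)) := by ring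
      _ = ((A (s + 2) * Y A B C (s + 1) + C (s + 1) * Y A B C s).det * (-1 : ℂ) ^ m) *
            ∏ i ∈ Finset.range s, (C (i + 1)).det := hmain
      _ = ((A (s + 2) * Y A B C (s + 1) + C (s + 1) * Y A B C s).det * (-1 : ℂ) ^ m) *
            ((∏ i ∈ Finset.range (s + 1), (B (i + 1)).det) *
              (transfer0Aux m A B C (s + 1)).det) := by rw [hTdet]
      _ = (A (s + 2) * Y A B C (s + 1) + C (s + 1) * Y A B C s).det * (-1 : ℂ) ^ m *
            (∏ i ∈ Finset.range (s + 1), (B (i + 1)).det) *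
            (transfer0Aux m A B C (s + 1)).det := by ring
  calc (blockTridiag m (s + 2) A B C).det
      = ((-1 : ℂ) ^ m) ^ (s + 2) *
          (((-1 : ℂ) ^ m) ^ (s + 2) * (blockTridiag m (s + 2) A B C).det) := by
        rw [← mul_assoc, ← mul_pow, hε2, one_pow, one_mul]
    _ = ((-1 : ℂ) ^ m) ^ (s + 2) *
          ((A (s + 2) * Y A B C (s + 1) + C (s + 1) * Y A B C s).det * (-1 : ℂ) ^ m *
            (∏ i ∈ Finset.range (s + 1), (B (i + 1)).det)) := by rw [hc]
    _ = ((-1 : ℂ) ^ m) ^ (s + 2) *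
          ((-1 : ℂ) ^ m * (A (s + 2) * Y A B C (s + 1) + C (s + 1) * Y A B C s).det) *
          (∏ i ∈ Finset.range (s + 1), (B (i + 1)).det) := by ring

end Main

end DetBT
theorem det_blockTridiag (m n : ℕ) (hm : 1 ≤ m) (hn : 2 ≤ n)
    (A B C : ℕ → Matrix (Fin m) (Fin m) ℂ)
    (hB : ∀ i, 1 ≤ i → i ≤ n - 1 → IsUnit (B i))
    (hC : ∀ i, 1 ≤ i → i ≤ n - 1 → IsUnit (C i)) :
    (blockTridiag m n A B C).det =
      (-1 : ℂ) ^ (n * m) * (Matrix.toBlocks₁₁ (transfer0 m n A B C)).det *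
        (((List.range (n - 1)).map (fun k => B (k + 1))).prod).det := by
  obtain ⟨s, rfl⟩ : ∃ s, n = s + 2 := ⟨n - 2, by omega⟩
  rw [show s + 2 - 1 = s + 1 from rfl] at hB hC ⊢
  rw [DetBT.det_key A B C s hB hC, DetBT.det_listprod (fun k => B (k + 1)) (s + 1)]
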